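/- Let α ≥ 1 and n ∈ ℕ with n ≥ 1. Then for every x ∈ (0,1), one has x^{-n} exp(1 - (1/2) x^{-α}) ≤ e · (2/α)^{n/α} · (n!)^{1/α}. -/

import Mathlib

open Real Set

theorem stmt10 (α : ℝ) (hα : 1 ≤ α) (n : ℕ) (hn : 1 ≤ n) (x : ℝ) (hx : x ∈ Ioo (0:ℝ) 1) :
    x ^ (-(n : ℝ)) * exp (1 - (1 / 2) * x ^ (-α)) ≤
      exp 1 * (2 / α) ^ ((n : ℝ) / α) * (n.factorial : ℝ) ^ (1 / α) := by
  obtain ⟨hx0, hx1⟩ := hx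
  have hα0 : (0:ℝ) < α := lt_of_lt_of_le one_pos hα
  have hn0 : (0:ℝ) < n := by exact_mod_cast hn
  set c : ℝ := n / α with hc
  have hc0 : 0 < c := div_pos hn0 hα0
  set t : ℝ := x ^ (-α) with ht
  have ht0 : 0 < t := rpow_pos_of_pos hx0 _
  -- rewrite x^(-n) = t^c
  have h1 : x ^ (-(n : ℝ)) = t ^ c := by
    rw [ht, ← Real.rpow_mul hx0.le]
    congr 1
    rw [hc]
    field_simp
  -- Step A: t^c * exp(-(t/2)) ≤ (2c)^c * exp(-c)
  have hA : t ^ c * exp (-(t/2)) ≤ (2*c) ^ c * exp (-c) := by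
    rw [Real.rpow_def_of_pos ht0, Real.rpow_def_of_pos (by linarith), ← Real.exp_add,
      ← Real.exp_add]
    apply Real.exp_le_exp.2
    have hlog : Real.log (t / (2*c)) ≤ t / (2*c) - 1 :=
      Real.log_le_sub_one_of_pos (div_pos ht0 (by linarith))
    rw [Real.log_div (ne_of_gt ht0) (by positivity)] at hlog
    have h2 : c * (Real.log t - Real.log (2*c)) ≤ c * (t / (2*c) - 1) :=
      mul_le_mul_of_nonneg_left hlog hc0.le
    have h3 : c * (t / (2*c) - 1) = t/2 - c := by
      field_simp
    nlinarith [h2, h3]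
  -- Step B: (2c)^c = (2/α)^c * n^c
  have hB : (2*c : ℝ) ^ c = (2/α) ^ c * (n:ℝ) ^ c := by
    rw [← Real.mul_rpow (by positivity) hn0.le]
    congr 1
    rw [hc]
    ring
  -- key: n^n ≤ exp n * n!
  have hkey : (n:ℝ) ^ (n:ℝ) * exp (-(n:ℝ)) ≤ (n.factorial : ℝ) := by
    have h := Real.pow_div_factorial_le_exp (x := (n:ℝ)) hn0.le n
    have hf : (0:ℝ) < n.factorial := by exact_mod_cast n.factorial_pos
    rw [div_le_iff₀ hf] at h
    rw [Real.rpow_natCast, Real.exp_neg, ← div_eq_mul_inv, div_le_iff₀ (Real.exp_pos _)]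
    nlinarith [Real.exp_pos (n:ℝ)]
  -- Step C: n^c * exp(-c) ≤ (n!)^(1/α)
  have hC : (n:ℝ) ^ c * exp (-c) ≤ (n.factorial : ℝ) ^ (1/α) := by
    have e1 : (n:ℝ) ^ c = ((n:ℝ) ^ (n:ℝ)) ^ (1/α) := by
      rw [← Real.rpow_mul hn0.le]
      congr 1
      rw [hc]; ring
    have e2 : exp (-c) = (exp (-(n:ℝ))) ^ (1/α) := by
      rw [Real.rpow_def_of_pos (Real.exp_pos _), Real.log_exp]
      congr 1
      rw [hc]; ring
    rw [e1, e2, ← Real.mul_rpow (by positivity) (Real.exp_pos _).le]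
    exact Real.rpow_le_rpow (by positivity) hkey (by positivity)
  -- combine
  have hexp : exp (1 - (1/2) * t) = exp 1 * exp (-(t/2)) := by
    rw [← Real.exp_add]; ring_nf
  rw [h1, hexp]
  calc t ^ c * (exp 1 * exp (-(t/2)))
      = exp 1 * (t ^ c * exp (-(t/2))) := by ring
    _ ≤ exp 1 * ((2*c)^c * exp (-c)) := by
        apply mul_le_mul_of_nonneg_left _ (Real.exp_pos _).le
        calc t ^ c * exp (-(t/2)) ≤ (2*c)^c * exp (-c) := hA
          _ = (2*c)^c * exp (-c) := rfl
    _ = exp 1 * ((2/α)^c * ((n:ℝ)^c * exp (-c))) := by rw [hB]; ring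
    _ ≤ exp 1 * ((2/α)^c * (n.factorial : ℝ) ^ (1/α)) := by
        apply mul_le_mul_of_nonneg_left _ (Real.exp_pos _).le
        exact mul_le_mul_of_nonneg_left hC (by positivity)
    _ = exp 1 * (2/α) ^ ((n:ℝ)/α) * (n.factorial : ℝ) ^ (1/α) := by rw [hc]; ring
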